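/- arXiv:1508.04541 — 3 statements merged into one kernel-verified Lean document; each statement's English description precedes it below -/
import Mathlib

section
/- For every (t+1)-connected graph H and every non-negative integer s < |V(H)|, every (K_s,t)-cockade is H-minor-free. -/
open SimpleGraph

/-- The Petersen graph: the Kneser graph whose vertices are the 2-element subsets of a
5-element set, with two vertices adjacent iff the corresponding subsets are disjoint. -/
def Petersen : SimpleGraph {s : Finset (Fin 5) // s.card = 2} where
  Adj a b := Disjoint a.1 b.1
  symm := ⟨fun _ _ h => h.symm⟩
  loopless := ⟨fun a h => by
    have h1 : a.1 = ⊥ := disjoint_self.mp h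
    have h2 := a.2
    rw [h1] at h2
    simp at h2⟩

/-- `H` is a minor of `G`: there is a family of nonempty, pairwise-disjoint connected
branch sets in `G`, one for each vertex of `H`, with an edge of `G` between the branch
sets corresponding to each edge of `H`. -/
def IsMinor {W V : Type*} (H : SimpleGraph W) (G : SimpleGraph V) : Prop :=
  ∃ f : W → Set V,
    (∀ w, (G.induce (f w)).Connected) ∧
    (∀ w₁ w₂ : W, w₁ ≠ w₂ → Disjoint (f w₁) (f w₂)) ∧
    ∀ ⦃w₁ w₂ : W⦄, H.Adj w₁ w₂ → ∃ v₁ ∈ f w₁, ∃ v₂ ∈ f w₂, G.Adj v₁ v₂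

/-- The vertex set `A` carries a `(K_s, t)`-cockade structure in `G`: either `G[A]` is a
complete graph on `s` vertices, or `A` is the union of two proper subsets `B` and `C`,
each carrying a cockade structure, whose intersection is a clique on `t` vertices, with
no edges of `G` joining `B \ C` to `C \ B`. -/
inductive CockadeOn {V : Type*} (G : SimpleGraph V) (s t : ℕ) : Set V → Prop
  | base (A : Set V) (hcard : A.ncard = s) (hclique : G.IsClique A) : CockadeOn G s t A
  | glue (A B C : Set V) (hun : B ∪ C = A) (hB : B ≠ A) (hC : C ≠ A)
      (hcard : (B ∩ C).ncard = t) (hclique : G.IsClique (B ∩ C))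
      (hcross : ∀ x ∈ B \ C, ∀ y ∈ C \ B, ¬ G.Adj x y)
      (h1 : CockadeOn G s t B) (h2 : CockadeOn G s t C) : CockadeOn G s t A

/-- `G` is a `(K_9, 2)`-cockade. -/
def IsK9Cockade {V : Type*} (G : SimpleGraph V) : Prop := CockadeOn G 9 2 Set.univ

/-- `G` is a spanning subgraph of a `(K_9, 2)`-cockade
(equivalently, a `(K_9,2)`-cockade minus some set of edges). -/
def SpanningSubgraphOfK9Cockade {V : Type*} (G : SimpleGraph V) : Prop :=
  ∃ G' : SimpleGraph V, G ≤ G' ∧ IsK9Cockade G'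

/-- A separation of `G`: a pair `(A, B)` of vertex subsets with `A \ B` and `B \ A`
nonempty such that every edge of `G` has both endpoints in `A` or both in `B`. -/
def IsSep {V : Type*} (G : SimpleGraph V) (A B : Set V) : Prop :=
  (A \ B).Nonempty ∧ (B \ A).Nonempty ∧
    ∀ ⦃x y : V⦄, G.Adj x y → (x ∈ A ∧ y ∈ A) ∨ (x ∈ B ∧ y ∈ B)

/-- `G` is `k`-connected: it has at least `k + 1` vertices and no separation of order
less than `k`. -/
def KConnected {V : Type*} (k : ℕ) (G : SimpleGraph V) : Prop :=
  k + 1 ≤ Nat.card V ∧ ∀ A B : Set V, IsSep G A B → k ≤ (A ∩ B).ncard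

/-- The number of edges of `G`. -/
noncomputable def edgeCount {V : Type*} (G : SimpleGraph V) : ℕ := Nat.card G.edgeSet

/-- The closed neighbourhood `N[v]`. -/
def closedNbhd {V : Type*} (G : SimpleGraph V) (v : V) : Set V :=
  insert v (G.neighborSet v)

/-- The degree of a vertex, as the cardinality of its neighbour set. -/
noncomputable def deg {V : Type*} (G : SimpleGraph V) (v : V) : ℕ :=
  (G.neighborSet v).ncard

/-- The neighbourhood `N(C)` of a vertex set `C`: all vertices outside `C`
adjacent to some vertex of `C`. -/
def setNbhd {V : Type*} (G : SimpleGraph V) (C : Set V) : Set V :=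
  {u | u ∉ C ∧ ∃ x ∈ C, G.Adj u x}

/-- `C` is (the vertex set of) a connected component of the induced subgraph `G[S]`. -/
def IsCompOf {V : Type*} (G : SimpleGraph V) (S C : Set V) : Prop :=
  C ⊆ S ∧ (G.induce C).Connected ∧ ∀ x ∈ C, ∀ y ∈ S, G.Adj x y → y ∈ C

/-- `G` is a minor-minimal counterexample: (i) `G` has at least 3 vertices;
(ii) `G` has at least `5n - 11` edges; (iii) `G` is not a spanning subgraph of a
`(K_9,2)`-cockade; (iv) the Petersen graph is not a minor of `G`; (v) every proper
minor `H` of `G` with at least three vertices has at most `5|V(H)| - 12` edges or is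
a spanning subgraph of a `(K_9,2)`-cockade. -/
def MinCounterexample {V : Type} [Fintype V] (G : SimpleGraph V) : Prop :=
  3 ≤ Nat.card V ∧
  (5 : ℤ) * (Nat.card V : ℤ) - 11 ≤ (edgeCount G : ℤ) ∧
  ¬ SpanningSubgraphOfK9Cockade G ∧
  ¬ IsMinor Petersen G ∧
  ∀ (W : Type) [Fintype W], ∀ H : SimpleGraph W,
    IsMinor H G → ¬ Nonempty (H ≃g G) → 3 ≤ Nat.card W →
      ((edgeCount H : ℤ) ≤ 5 * (Nat.card W : ℤ) - 12 ∨ SpanningSubgraphOfK9Cockade H)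

/-- The set `𝓛`: vertices `v` of degree at most 9 such that no vertex `u` satisfies
`N[u] ⊊ N[v]`. -/
def goodSet {V : Type*} (G : SimpleGraph V) : Set V :=
  {v | deg G v ≤ 9 ∧ ¬ ∃ u, closedNbhd G u ⊂ closedNbhd G v}

/-- Planarity, via Wagner's characterisation: a graph is planar iff it has
neither a `K₅` minor nor a `K₃,₃` minor. -/
def IsPlanar {V : Type*} (G : SimpleGraph V) : Prop :=
  ¬ IsMinor (completeGraph (Fin 5)) G ∧
  ¬ IsMinor (completeBipartiteGraph (Fin 3) (Fin 3)) G

/-- The join `K₅ + complement (K_m)`. -/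
def K5Join (m : ℕ) : SimpleGraph (Fin 5 ⊕ Fin m) where
  Adj a b := a ≠ b ∧ (a.isLeft = true ∨ b.isLeft = true)
  symm := ⟨fun _ _ h => ⟨h.1.symm, h.2.symm⟩⟩
  loopless := ⟨fun _ h => h.1 rfl⟩

/-- Connectivity within a set, as a relation on ambient vertices. -/
def ConnIn {V : Type*} (G : SimpleGraph V) (S : Set V) : V → V → Prop :=
  Relation.ReflTransGen (fun a b => a ∈ S ∧ b ∈ S ∧ G.Adj a b)

lemma connIn_symm {V : Type*} {G : SimpleGraph V} {S : Set V} {x y : V}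
    (h : ConnIn G S x y) : ConnIn G S y x :=
  by
    haveI : Std.Symm (fun a b => a ∈ S ∧ b ∈ S ∧ G.Adj a b) :=
      ⟨fun _ _ h => ⟨h.2.1, h.1, h.2.2.symm⟩⟩
    exact (Relation.ReflTransGen.stdSymm (r := fun a b => a ∈ S ∧ b ∈ S ∧ G.Adj a b)).symm _ _ h

lemma connIn_of_walk {V : Type*} {G : SimpleGraph V} {S : Set V} {a b : ↥S}
    (w : (G.induce S).Walk a b) : ConnIn G S a.1 b.1 := by
  induction w with
  | nil => exact Relation.ReflTransGen.refl
  | cons hadj p ih =>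
    rename_i u v _
    exact Relation.ReflTransGen.head ⟨u.2, v.2, hadj⟩ ih

lemma connIn_of_connected {V : Type*} {G : SimpleGraph V} {S : Set V}
    (h : (G.induce S).Connected) {x y : V} (hx : x ∈ S) (hy : y ∈ S) :
    ConnIn G S x y := by
  obtain ⟨w⟩ := h.preconnected ⟨x, hx⟩ ⟨y, hy⟩
  exact connIn_of_walk w

lemma reachable_of_connIn {V : Type*} {G : SimpleGraph V} {S : Set V} {x y : V}
    (h : ConnIn G S x y) (hx : x ∈ S) :
    ∃ hy : y ∈ S, (G.induce S).Reachable ⟨x, hx⟩ ⟨y, hy⟩ := by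
  induction h with
  | refl => exact ⟨hx, Reachable.refl _⟩
  | tail _ hab ih =>
    obtain ⟨ha, hr⟩ := ih
    exact ⟨hab.2.1, hr.trans (SimpleGraph.Adj.reachable (by exact hab.2.2))⟩

lemma connected_of_connIn {V : Type*} {G : SimpleGraph V} {S : Set V}
    (hne : S.Nonempty) (h : ∀ x ∈ S, ∀ y ∈ S, ConnIn G S x y) :
    (G.induce S).Connected := by
  rw [connected_iff]
  refine ⟨fun x y => ?_, ⟨⟨hne.choose, hne.choose_spec⟩⟩⟩
  obtain ⟨hy, hr⟩ := reachable_of_connIn (h x x.2 y y.2) x.2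
  exact hr

/-- Closure principle for ConnIn. -/
lemma connIn_closed {V : Type*} {G : SimpleGraph V} {S P : Set V} {x y : V}
    (hstep : ∀ a b, a ∈ P → a ∈ S → b ∈ S → G.Adj a b → b ∈ P)
    (h : ConnIn G S x y) (hx : x ∈ P) : y ∈ P := by
  induction h with
  | refl => exact hx
  | tail _ hab ih => exact hstep _ _ ih hab.1 hab.2.1 hab.2.2

/-- A connected set in `B ∪ C` (with all edges inside `B` or inside `C`)
meeting both `B` and `C` must meet `B ∩ C`. -/
lemma meets_inter {V : Type*} {G : SimpleGraph V} {B C S : Set V}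
    (hedge : ∀ ⦃x y⦄, x ∈ B ∪ C → y ∈ B ∪ C → G.Adj x y → (x ∈ B ∧ y ∈ B) ∨ (x ∈ C ∧ y ∈ C))
    (hS : S ⊆ B ∪ C) (hconn : (G.induce S).Connected)
    (hB : (S ∩ B).Nonempty) (hC : (S ∩ C).Nonempty) : (S ∩ (B ∩ C)).Nonempty := by
  by_contra hempty
  rw [Set.not_nonempty_iff_eq_empty] at hempty
  obtain ⟨x, hxS, hxB⟩ := hB
  obtain ⟨y, hyS, hyC⟩ := hC
  have hcl : y ∈ B := by
    refine connIn_closed (P := B) ?_ (connIn_of_connected hconn hxS hyS) hxB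
    intro a b ha haS hbS hadj
    rcases hedge (hS haS) (hS hbS) hadj with h | h
    · exact h.2
    · have hin : a ∈ S ∩ (B ∩ C) := ⟨haS, ha, h.1⟩
      rw [hempty] at hin
      exact hin.elim
  have hin : y ∈ S ∩ (B ∩ C) := ⟨hyS, hcl, hyC⟩
  rw [hempty] at hin
  exact hin.elim

/-- From a vertex of `S ∩ C`, if `S` also leaves `C`, one can reach (inside `S ∩ C`)
a vertex of `S ∩ (B ∩ C)`. -/
lemma reach_clique {V : Type*} {G : SimpleGraph V} {B C S : Set V}
    (hedge : ∀ ⦃x y⦄, x ∈ B ∪ C → y ∈ B ∪ C → G.Adj x y → (x ∈ B ∧ y ∈ B) ∨ (x ∈ C ∧ y ∈ C))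
    (hS : S ⊆ B ∪ C) {z b : V} (hzb : ConnIn G S z b) (hb : b ∉ C) :
    ∀ hz : z ∈ S ∩ C, ∃ c ∈ S ∩ (B ∩ C), ConnIn G (S ∩ C) z c := by
  induction hzb using Relation.ReflTransGen.head_induction_on with
  | refl => exact fun hz => absurd hz.2 hb
  | head h' h ih =>
    rename_i a a'
    intro hz
    by_cases ha' : a' ∈ C
    · obtain ⟨c, hc, hconn⟩ := ih ⟨h'.2.1, ha'⟩
      exact ⟨c, hc, Relation.ReflTransGen.head ⟨⟨h'.1, hz.2⟩, ⟨h'.2.1, ha'⟩, h'.2.2⟩ hconn⟩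
    · rcases hedge (hS h'.1) (hS h'.2.1) h'.2.2 with hh | hh
      · exact ⟨a, ⟨hz.1, hh.1, hz.2⟩, Relation.ReflTransGen.refl⟩
      · exact absurd hh.2 ha'

/-- The key restriction lemma: `S ∩ C` induces a connected graph. -/
lemma restrict_connected {V : Type*} {G : SimpleGraph V} {B C S : Set V}
    (hclique : G.IsClique (B ∩ C))
    (hedge : ∀ ⦃x y⦄, x ∈ B ∪ C → y ∈ B ∪ C → G.Adj x y → (x ∈ B ∧ y ∈ B) ∨ (x ∈ C ∧ y ∈ C))
    (hS : S ⊆ B ∪ C) (hconn : (G.induce S).Connected) (hne : (S ∩ C).Nonempty) :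
    (G.induce (S ∩ C)).Connected := by
  by_cases hsub : S ⊆ C
  · have : S ∩ C = S := Set.inter_eq_left.mpr hsub
    rw [this]; exact hconn
  · obtain ⟨b, hbS, hbC⟩ := Set.not_subset.mp hsub
    refine connected_of_connIn hne fun x hx y hy => ?_
    obtain ⟨c₁, hc₁, hr₁⟩ := reach_clique hedge hS (connIn_of_connected hconn hx.1 hbS) hbC hx
    obtain ⟨c₂, hc₂, hr₂⟩ := reach_clique hedge hS (connIn_of_connected hconn hy.1 hbS) hbC hy
    refine hr₁.trans (Relation.ReflTransGen.trans ?_ (connIn_symm hr₂))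
    by_cases hcc : c₁ = c₂
    · rw [hcc]
    · exact Relation.ReflTransGen.single
        ⟨⟨hc₁.1, hc₁.2.2⟩, ⟨hc₂.1, hc₂.2.2⟩, hclique hc₁.2 hc₂.2 hcc⟩

/-- Restricting a branch decomposition to one side of a clique cut. -/
lemma side_step {WH : Type} {V : Type} {H : SimpleGraph WH} {G : SimpleGraph V}
    {B C : Set V}
    (hclique : G.IsClique (B ∩ C))
    (hedge : ∀ ⦃x y⦄, x ∈ B ∪ C → y ∈ B ∪ C → G.Adj x y → (x ∈ B ∧ y ∈ B) ∨ (x ∈ C ∧ y ∈ C))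
    (f : WH → Set V)
    (hc : ∀ w, (G.induce (f w)).Connected)
    (hd : ∀ w₁ w₂, w₁ ≠ w₂ → Disjoint (f w₁) (f w₂))
    (he : ∀ ⦃w₁ w₂⦄, H.Adj w₁ w₂ → ∃ v₁ ∈ f w₁, ∃ v₂ ∈ f w₂, G.Adj v₁ v₂)
    (hsub : ∀ w, f w ⊆ B ∪ C)
    (hmeet : ∀ w, (f w ∩ C).Nonempty) :
    (∀ w, (G.induce (f w ∩ C)).Connected) ∧
    (∀ w₁ w₂, w₁ ≠ w₂ → Disjoint (f w₁ ∩ C) (f w₂ ∩ C)) ∧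
    (∀ ⦃w₁ w₂⦄, H.Adj w₁ w₂ → ∃ v₁ ∈ f w₁ ∩ C, ∃ v₂ ∈ f w₂ ∩ C, G.Adj v₁ v₂) := by
  have hbc : ∀ w, (f w ∩ B).Nonempty → ¬ f w ⊆ C → (f w ∩ (B ∩ C)).Nonempty := by
    intro w hB hsubC
    exact meets_inter hedge (hsub w) (hc w) hB (hmeet w)
  refine ⟨fun w => restrict_connected hclique hedge (hsub w) (hc w) (hmeet w),
    fun w₁ w₂ hne => (hd w₁ w₂ hne).mono Set.inter_subset_left Set.inter_subset_left,
    fun w₁ w₂ hadj => ?_⟩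
  obtain ⟨u, hu, v, hv, huv⟩ := he hadj
  have hne : w₁ ≠ w₂ := hadj.ne
  -- get a clique vertex inside `f w` when some particular vertex of `f w` is outside `C`
  have key : ∀ w x, x ∈ f w → x ∈ B → x ∉ C → ∃ c, c ∈ f w ∩ (B ∩ C) := by
    intro w x hx hxB hxC
    have := hbc w ⟨x, hx, hxB⟩ (fun hsubC => hxC (hsubC hx))
    exact ⟨this.choose, this.choose_spec⟩
  rcases hedge (hsub w₁ hu) (hsub w₂ hv) huv with ⟨huB, hvB⟩ | ⟨huC, hvC⟩
  · by_cases huC : u ∈ C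
    · by_cases hvC : v ∈ C
      · exact ⟨u, ⟨hu, huC⟩, v, ⟨hv, hvC⟩, huv⟩
      · obtain ⟨c₂, hc₂⟩ := key w₂ v hv hvB hvC
        have hne' : u ≠ c₂ := fun h => (hd w₁ w₂ hne).ne_of_mem hu hc₂.1 h
        exact ⟨u, ⟨hu, huC⟩, c₂, ⟨hc₂.1, hc₂.2.2⟩, hclique ⟨huB, huC⟩ hc₂.2 hne'⟩
    · obtain ⟨c₁, hc₁⟩ := key w₁ u hu huB huC
      by_cases hvC : v ∈ C
      · have hne' : c₁ ≠ v := fun h => (hd w₁ w₂ hne).ne_of_mem hc₁.1 hv h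
        exact ⟨c₁, ⟨hc₁.1, hc₁.2.2⟩, v, ⟨hv, hvC⟩, hclique hc₁.2 ⟨hvB, hvC⟩ hne'⟩
      · obtain ⟨c₂, hc₂⟩ := key w₂ v hv hvB hvC
        have hne' : c₁ ≠ c₂ := fun h => (hd w₁ w₂ hne).ne_of_mem hc₁.1 hc₂.1 h
        exact ⟨c₁, ⟨hc₁.1, hc₁.2.2⟩, c₂, ⟨hc₂.1, hc₂.2.2⟩, hclique hc₁.2 hc₂.2 hne'⟩
  · exact ⟨u, ⟨hu, huC⟩, v, ⟨hv, hvC⟩, huv⟩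


lemma cockade_aux {WH : Type} [Fintype WH] (H : SimpleGraph WH) (t s : ℕ)
    (hconn : KConnected (t + 1) H) (hs : s < Nat.card WH)
    {V : Type} [Fintype V] {G : SimpleGraph V} {A : Set V}
    (hG : CockadeOn G s t A) :
    ∀ f : WH → Set V,
      (∀ w, (G.induce (f w)).Connected) →
      (∀ w₁ w₂, w₁ ≠ w₂ → Disjoint (f w₁) (f w₂)) →
      (∀ ⦃w₁ w₂⦄, H.Adj w₁ w₂ → ∃ v₁ ∈ f w₁, ∃ v₂ ∈ f w₂, G.Adj v₁ v₂) →
      (∀ w, f w ⊆ A) → False := by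
  have hWHne : Nonempty WH := by
    have h1 : 0 < Nat.card WH := by omega
    exact (Nat.card_pos_iff.mp h1).1
  induction hG with
  | base A hcard hclique =>
    intro f hc hd he hsub
    have hfne : ∀ w, (f w).Nonempty := fun w =>
      Set.nonempty_coe_sort.mp (hc w).nonempty
    classical
    set q : WH → V := fun w => (hfne w).choose with hq
    have hqmem : ∀ w, q w ∈ f w := fun w => (hfne w).choose_spec
    have hmaps : ∀ w ∈ (Set.univ : Set WH), q w ∈ A := fun w _ => hsub w (hqmem w)
    have hinj : Set.InjOn q (Set.univ : Set WH) := by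
      intro w₁ _ w₂ _ hqe
      by_contra hne
      exact (hd w₁ w₂ hne).ne_of_mem (hqmem w₁) (hqmem w₂) hqe
    have hle : (Set.univ : Set WH).ncard ≤ A.ncard :=
      Set.ncard_le_ncard_of_injOn q hmaps hinj (Set.toFinite A)
    rw [Set.ncard_univ, hcard] at hle
    omega
  | glue A B C hun hB hC hcard hclique hcross h1 h2 ih1 ih2 =>
    intro f hc hd he hsub
    subst hun
    classical
    have hedge : ∀ ⦃x y⦄, x ∈ B ∪ C → y ∈ B ∪ C → G.Adj x y →
        (x ∈ B ∧ y ∈ B) ∨ (x ∈ C ∧ y ∈ C) := by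
      intro x y hx hy hadj
      rcases hx with hxB | hxC
      · rcases hy with hyB | hyC
        · exact Or.inl ⟨hxB, hyB⟩
        · by_cases hxC : x ∈ C
          · exact Or.inr ⟨hxC, hyC⟩
          · by_cases hyB : y ∈ B
            · exact Or.inl ⟨hxB, hyB⟩
            · exact absurd hadj (hcross x ⟨hxB, hxC⟩ y ⟨hyC, hyB⟩)
      · rcases hy with hyB | hyC
        · by_cases hyC : y ∈ C
          · exact Or.inr ⟨hxC, hyC⟩
          · by_cases hxB : x ∈ B
            · exact Or.inl ⟨hxB, hyB⟩
            · exact absurd hadj.symm (hcross y ⟨hyB, hyC⟩ x ⟨hxC, hxB⟩)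
        · exact Or.inr ⟨hxC, hyC⟩
    have hedge' : ∀ ⦃x y⦄, x ∈ C ∪ B → y ∈ C ∪ B → G.Adj x y →
        (x ∈ C ∧ y ∈ C) ∨ (x ∈ B ∧ y ∈ B) := by
      intro x y hx hy hadj
      rw [Set.union_comm] at hx hy
      exact (hedge hx hy hadj).symm
    have hfne : ∀ w, (f w).Nonempty := fun w =>
      Set.nonempty_coe_sort.mp (hc w).nonempty
    set SB : Set WH := {w | (f w ∩ B).Nonempty} with hSB
    set SC : Set WH := {w | (f w ∩ C).Nonempty} with hSC
    have hcover : ∀ w, w ∈ SB ∪ SC := by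
      intro w
      obtain ⟨v, hv⟩ := hfne w
      rcases hsub w hv with h | h
      · exact Or.inl ⟨v, hv, h⟩
      · exact Or.inr ⟨v, hv, h⟩
    by_cases hsep : (SB \ SC).Nonempty ∧ (SC \ SB).Nonempty
    · -- a separation of H of order ≤ t, contradiction with (t+1)-connectivity
      have hIsSep : IsSep H SB SC := by
        refine ⟨hsep.1, hsep.2, fun w₁ w₂ hadj => ?_⟩
        obtain ⟨u, hu, v, hv, huv⟩ := he hadj
        rcases hedge (hsub w₁ hu) (hsub w₂ hv) huv with ⟨h1', h2'⟩ | ⟨h1', h2'⟩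
        · exact Or.inl ⟨⟨u, hu, h1'⟩, ⟨v, hv, h2'⟩⟩
        · exact Or.inr ⟨⟨u, hu, h1'⟩, ⟨v, hv, h2'⟩⟩
      have hord := hconn.2 SB SC hIsSep
      have hpt : ∀ w ∈ SB ∩ SC, (f w ∩ (B ∩ C)).Nonempty := by
        intro w hw
        exact meets_inter hedge (hsub w) (hc w) hw.1 hw.2
      obtain ⟨w₀, v₀⟩ : ∃ w : WH, True := ⟨Classical.arbitrary WH, trivial⟩
      set p : WH → V := fun w =>
        if h : w ∈ SB ∩ SC then (hpt w h).choose else (hfne w₀).choose with hp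
      have hpmem : ∀ w ∈ SB ∩ SC, p w ∈ f w ∩ (B ∩ C) := by
        intro w hw
        simp only [hp, dif_pos hw]
        exact (hpt w hw).choose_spec
      have hmaps : ∀ w ∈ SB ∩ SC, p w ∈ B ∩ C := fun w hw => (hpmem w hw).2
      have hinj : Set.InjOn p (SB ∩ SC) := by
        intro w₁ hw₁ w₂ hw₂ hpe
        by_contra hne
        exact (hd w₁ w₂ hne).ne_of_mem (hpmem w₁ hw₁).1 (hpmem w₂ hw₂).1 hpe
      have hle : (SB ∩ SC).ncard ≤ (B ∩ C).ncard :=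
        Set.ncard_le_ncard_of_injOn p hmaps hinj (Set.toFinite _)
      rw [hcard] at hle
      omega
    · rw [not_and_or] at hsep
      rcases hsep with hsep | hsep
      · -- every branch set meets C; restrict to C
        rw [Set.not_nonempty_iff_eq_empty] at hsep
        have hmeet : ∀ w, (f w ∩ C).Nonempty := by
          intro w
          rcases hcover w with h | h
          · by_contra hne
            have : w ∈ SB \ SC := ⟨h, hne⟩
            rw [hsep] at this
            exact this.elim
          · exact h
        obtain ⟨hc', hd', he'⟩ := side_step hclique hedge f hc hd he hsub hmeet
        exact ih2 (fun w => f w ∩ C) hc' hd' he'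
          (fun w => Set.inter_subset_right)
      · -- every branch set meets B; restrict to B
        rw [Set.not_nonempty_iff_eq_empty] at hsep
        have hmeet : ∀ w, (f w ∩ B).Nonempty := by
          intro w
          rcases hcover w with h | h
          · exact h
          · by_contra hne
            have : w ∈ SC \ SB := ⟨h, hne⟩
            rw [hsep] at this
            exact this.elim
        have hclique' : G.IsClique (C ∩ B) := by rwa [Set.inter_comm]
        have hsub' : ∀ w, f w ⊆ C ∪ B := by
          intro w
          rw [Set.union_comm]
          exact hsub w
        obtain ⟨hc', hd', he'⟩ := side_step hclique' hedge' f hc hd he hsub' hmeet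
        exact ih1 (fun w => f w ∩ B) hc' hd' he'
          (fun w => Set.inter_subset_right)

/-- For every `(t+1)`-connected graph `H` and every non-negative
integer `s < |V(H)|`, every `(K_s, t)`-cockade is `H`-minor-free. -/
theorem cockade_minor_free {WH : Type} [Fintype WH] (H : SimpleGraph WH) (t s : ℕ)
    (hconn : KConnected (t + 1) H) (hs : s < Nat.card WH)
    {V : Type} [Fintype V] (G : SimpleGraph V) (hG : CockadeOn G s t Set.univ) :
    ¬ IsMinor H G := by
  rintro ⟨f, hc, hd, he⟩
  exact cockade_aux H t s hconn hs hG f hc hd he (fun w => Set.subset_univ _)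
end

section
/- Every (K_9,2)-cockade on n vertices has exactly 5n − 9 edges and does not contain the Petersen graph as a minor. -/
open SimpleGraph

abbrev PV := {s : Finset (Fin 5) // s.card = 2}

def pvOf (a b : Fin 5) (h : ({a,b} : Finset (Fin 5)).card = 2 := by decide) : PV := ⟨{a,b}, h⟩

def eFun : Fin 10 → PV
  | 0 => pvOf 0 1 | 1 => pvOf 0 2 | 2 => pvOf 0 3 | 3 => pvOf 0 4
  | 4 => pvOf 1 2 | 5 => pvOf 1 3 | 6 => pvOf 1 4
  | 7 => pvOf 2 3 | 8 => pvOf 2 4 | 9 => pvOf 3 4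

def nbrs : Fin 10 → List (Fin 10)
  | 0 => [7,8,9] | 1 => [5,6,9] | 2 => [4,6,8] | 3 => [4,5,7] | 4 => [2,3,9]
  | 5 => [1,3,8] | 6 => [1,2,7] | 7 => [0,3,6] | 8 => [0,2,5] | 9 => [0,1,4]

def start (z1 z2 : Fin 10) : Fin 10 :=
  if z1 = 0 ∨ z2 = 0 then (if z1 = 1 ∨ z2 = 1 then 2 else 1) else 0

def reachL (z1 z2 : Fin 10) : ℕ → List (Fin 10)
  | 0 => [start z1 z2]
  | n+1 => let L := reachL z1 z2 n
           L ++ (L.flatMap nbrs).filter (fun v => v ≠ z1 && v ≠ z2)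

lemma start_ne : ∀ z1 z2 : Fin 10, start z1 z2 ≠ z1 ∧ start z1 z2 ≠ z2 := by decide

lemma eFun_inj : ∀ i j : Fin 10, eFun i = eFun j → i = j := by decide

lemma eFun_surj : ∀ v : PV, ∃ i, eFun i = v := by decide

instance : DecidableRel Petersen.Adj :=
  fun a b => inferInstanceAs (Decidable (Disjoint a.1 b.1))

lemma nbrs_adj : ∀ u : Fin 10, ∀ v ∈ nbrs u, Petersen.Adj (eFun u) (eFun v) := by decide

set_option maxRecDepth 10000 in
set_option maxHeartbeats 2000000 in
lemma cover : ∀ z1 z2 : Fin 10, ∀ y, y ≠ z1 → y ≠ z2 → y ∈ reachL z1 z2 5 := by decide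

lemma reach_invariant (z1 z2 : Fin 10) (P : Fin 10 → Prop)
    (hstart : P (start z1 z2))
    (hstep : ∀ u v, P u → u ≠ z1 → u ≠ z2 → v ∈ nbrs u → v ≠ z1 → v ≠ z2 → P v) :
    ∀ n, ∀ y ∈ reachL z1 z2 n, P y ∧ y ≠ z1 ∧ y ≠ z2 := by
  intro n
  induction n with
  | zero =>
    intro y hy
    simp only [reachL, List.mem_singleton] at hy
    subst hy
    exact ⟨hstart, (start_ne z1 z2).1, (start_ne z1 z2).2⟩
  | succ n ih =>
    intro y hy
    simp only [reachL, List.mem_append, List.mem_filter, List.mem_flatMap] at hy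
    rcases hy with hy | ⟨⟨u, hu, hyn⟩, hb⟩
    · exact ih y hy
    · have hb' : y ≠ z1 ∧ y ≠ z2 := by
        simpa [Bool.and_eq_true, decide_eq_true_eq] using hb
      obtain ⟨hPu, hu1, hu2⟩ := ih u hu
      exact ⟨hstep u y hPu hu1 hu2 hyn hb'.1 hb'.2, hb'⟩

/-- Petersen is 3-connected, in separation form: no set of ≤2 "bad" vertices
separates a nontrivial "closed" set. -/
lemma petersen_sep (S Bad : Set PV) (hsmall : ∃ z1 z2 : PV, Bad ⊆ {z1, z2})
    (x y : PV) (hx : x ∈ S) (hxB : x ∉ Bad) (hy : y ∉ S) (hyB : y ∉ Bad)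
    (hcl : ∀ u v, u ∈ S → v ∉ S → u ∉ Bad → v ∉ Bad → ¬ Petersen.Adj u v) : False := by
  classical
  -- choose an exclusion pair (w1, w2) covering Bad and avoiding x, y
  obtain ⟨z1, z2, hz⟩ := hsmall
  -- a fresh vertex different from x and y
  obtain ⟨fr, hfrx, hfry⟩ : ∃ fr : PV, fr ≠ x ∧ fr ≠ y := by
    by_cases e1 : pvOf 0 1 = x ∨ pvOf 0 1 = y
    case neg => push_neg at e1; exact ⟨_, e1.1, e1.2⟩
    by_cases e2 : pvOf 0 2 = x ∨ pvOf 0 2 = y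
    case neg => push_neg at e2; exact ⟨_, e2.1, e2.2⟩
    refine ⟨pvOf 0 3, ?_, ?_⟩ <;>
    · rintro rfl
      rcases e1 with h1 | h1 <;> rcases e2 with h2 | h2 <;>
        first
          | exact absurd h1 (by decide)
          | exact absurd h2 (by decide)
          | exact absurd (h1.trans h2.symm) (by decide)
  obtain ⟨w1, w2, hw, hxw1, hxw2, hyw1, hyw2⟩ :
      ∃ w1 w2 : PV, Bad ⊆ {w1, w2} ∧ x ≠ w1 ∧ x ≠ w2 ∧ y ≠ w1 ∧ y ≠ w2 := by
    by_cases h1 : z1 ∈ Bad <;> by_cases h2 : z2 ∈ Bad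
    · refine ⟨z1, z2, hz, ?_, ?_, ?_, ?_⟩ <;> rintro rfl <;> first | exact hxB ‹_› | exact hyB ‹_›
    · refine ⟨z1, fr, fun v hv => ?_, ?_, hfrx.symm, ?_, hfry.symm⟩
      · rcases hz hv with h | h
        · exact Or.inl h
        · exact absurd (h ▸ hv) h2
      · rintro rfl; exact hxB h1
      · rintro rfl; exact hyB h1
    · refine ⟨z2, fr, fun v hv => ?_, ?_, hfrx.symm, ?_, hfry.symm⟩
      · rcases hz hv with h | h
        · exact absurd (h ▸ hv) h1
        · exact Or.inl h
      · rintro rfl; exact hxB h2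
      · rintro rfl; exact hyB h2
    · refine ⟨fr, fr, fun v hv => ?_, hfrx.symm, hfrx.symm, hfry.symm, hfry.symm⟩
      · rcases hz hv with h | h
        · exact absurd (h ▸ hv) h1
        · exact absurd (h ▸ hv) h2
  -- pull back to Fin 10
  obtain ⟨z1', rfl⟩ := eFun_surj w1
  obtain ⟨z2', rfl⟩ := eFun_surj w2
  obtain ⟨x', rfl⟩ := eFun_surj x
  obtain ⟨y', rfl⟩ := eFun_surj y
  have hBad : ∀ i : Fin 10, i ≠ z1' → i ≠ z2' → eFun i ∉ Bad := by
    intro i h1 h2 hB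
    rcases hw hB with h | h
    · exact h1 (eFun_inj _ _ h)
    · exact h2 (eFun_inj _ _ h)
  -- the side containing the BFS start
  set s0 := start z1' z2' with hs0
  have hs0z := start_ne z1' z2'
  by_cases hside : eFun s0 ∈ S
  · have key := reach_invariant z1' z2' (fun i => eFun i ∈ S) hside ?_ 5
    · have hy' := key y' (cover z1' z2' y'
        (fun h => hyw1 (congrArg eFun h)) (fun h => hyw2 (congrArg eFun h)))
      exact hy hy'.1
    · intro u v hu hu1 hu2 hv hv1 hv2
      by_contra hvS
      exact hcl (eFun u) (eFun v) hu hvS (hBad u hu1 hu2) (hBad v hv1 hv2)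
        (nbrs_adj u v hv)
  · have key := reach_invariant z1' z2' (fun i => eFun i ∉ S) hside ?_ 5
    · have hx' := key x' (cover z1' z2' x'
        (fun h => hxw1 (congrArg eFun h)) (fun h => hxw2 (congrArg eFun h)))
      exact hx'.1 hx
    · intro u v hu hu1 hu2 hv hv1 hv2
      by_contra hvS
      exact hcl (eFun v) (eFun u) hvS hu (hBad v hv1 hv2) (hBad u hu1 hu2)
        ((nbrs_adj u v hv).symm)


section TwoCut
variable {V : Type*} {G : SimpleGraph V} {B C : Set V} {a b : V}

lemma walk_reach (hBC : B ∩ C = {a, b}) (hab : G.Adj a b)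
    (hcross : ∀ x ∈ B \ C, ∀ y ∈ C \ B, ¬ G.Adj x y)
    {X : Set V} (hX : X ⊆ B ∪ C) :
    ∀ {x y : ↥X}, (G.induce X).Walk x y → ∀ hy : (y : V) ∈ B,
      ∃ u, ∃ hu : u ∈ X ∩ B,
        (G.induce (X ∩ B)).Reachable ⟨u, hu⟩ ⟨(y : V), ⟨y.2, hy⟩⟩ ∧
        ((x : V) ∈ B → u = (x : V)) ∧ ((x : V) ∉ B → u = a ∨ u = b) := by
  intro x y p
  induction p with
  | nil =>
    intro hy
    exact ⟨_, ⟨Subtype.coe_prop _, hy⟩, Reachable.refl _, fun _ => rfl, fun h => absurd hy h⟩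
  | @cons x z y h p ih =>
    intro hy
    obtain ⟨u', hu', hreach, hcz, hcz'⟩ := ih hy
    have hGxz : G.Adj (x : V) (z : V) := h
    by_cases hzB : (z : V) ∈ B
    · have huz : u' = (z : V) := hcz hzB
      by_cases hxB : (x : V) ∈ B
      · refine ⟨(x : V), ⟨x.2, hxB⟩, ?_, fun _ => rfl, fun hc => absurd hxB hc⟩
        have hz2 : (⟨u', hu'⟩ : ↥(X ∩ B)) = ⟨(z : V), ⟨z.2, hzB⟩⟩ := Subtype.ext huz
        rw [hz2] at hreach
        exact (Adj.reachable (by exact hGxz : (G.induce (X ∩ B)).Adj ⟨(x : V), ⟨x.2, hxB⟩⟩ ⟨(z : V), ⟨z.2, hzB⟩⟩)).trans hreach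
      · -- x ∉ B, z ∈ B: crossing edge, so z ∈ {a, b}
        have hxCB : (x : V) ∈ C \ B := ⟨(hX x.2).resolve_left hxB, hxB⟩
        have hzBC : (z : V) ∈ B ∩ C := by
          by_contra hc
          exact hcross _ ⟨hzB, fun hzc => hc ⟨hzB, hzc⟩⟩ _ hxCB hGxz.symm
        refine ⟨u', hu', hreach, fun hc => absurd hc hxB, fun _ => ?_⟩
        rw [huz]
        have := hBC ▸ hzBC
        simpa using this
    · -- z ∉ B: z ∈ C \ B
      have hzCB : (z : V) ∈ C \ B := ⟨(hX z.2).resolve_left hzB, hzB⟩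
      have hu'ab : u' = a ∨ u' = b := hcz' hzB
      by_cases hxB : (x : V) ∈ B
      · have hxBC : (x : V) ∈ B ∩ C := by
          by_contra hc
          exact hcross _ ⟨hxB, fun hxc => hc ⟨hxB, hxc⟩⟩ _ hzCB hGxz
        have hxab : (x : V) = a ∨ (x : V) = b := by
          have := hBC ▸ hxBC; simpa using this
        refine ⟨(x : V), ⟨x.2, hxB⟩, ?_, fun _ => rfl, fun hc => absurd hxB hc⟩
        by_cases hux : u' = (x : V)
        · exact hux ▸ hreach
        · have hadj : G.Adj (x : V) u' := by
            rcases hxab with h1 | h1 <;> rcases hu'ab with h2 | h2 <;>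
              first
                | (exact absurd (h2.trans h1.symm) hux)
                | (rw [h1, h2]; exact hab)
                | (rw [h1, h2]; exact hab.symm)
          exact (Adj.reachable (by exact hadj : (G.induce (X ∩ B)).Adj ⟨(x:V), ⟨x.2, hxB⟩⟩ ⟨u', hu'⟩)).trans hreach
      · exact ⟨u', hu', hreach, fun hc => absurd hc hxB, fun _ => hu'ab⟩

lemma conn_inter (hBC : B ∩ C = {a, b}) (hab : G.Adj a b)
    (hcross : ∀ x ∈ B \ C, ∀ y ∈ C \ B, ¬ G.Adj x y)
    {X : Set V} (hX : X ⊆ B ∪ C) (hconn : (G.induce X).Connected)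
    (hne : (X ∩ B).Nonempty) : (G.induce (X ∩ B)).Connected := by
  rw [connected_iff]
  refine ⟨?_, ⟨⟨hne.choose, hne.choose_spec⟩⟩⟩
  · rintro ⟨u, hu⟩ ⟨v, hv⟩
    have hr := hconn.preconnected ⟨u, hu.1⟩ ⟨v, hv.1⟩
    refine hr.elim fun p => ?_
    obtain ⟨u₀, hu₀, hreach, hc, -⟩ := walk_reach hBC hab hcross hX p hv.2
    have : (⟨u₀, hu₀⟩ : ↥(X ∩ B)) = ⟨u, hu⟩ := Subtype.ext (hc hu.2)
    rw [this] at hreach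
    exact hreach

lemma straddle (hBC : B ∩ C = {a, b}) (hab : G.Adj a b)
    (hcross : ∀ x ∈ B \ C, ∀ y ∈ C \ B, ¬ G.Adj x y)
    {X : Set V} (hX : X ⊆ B ∪ C) (hconn : (G.induce X).Connected)
    {p q : V} (hp : p ∈ X) (hpB : p ∉ B) (hq : q ∈ X) (hqB : q ∈ B) :
    a ∈ X ∨ b ∈ X := by
  have hr := hconn.preconnected ⟨p, hp⟩ ⟨q, hq⟩
  refine hr.elim fun w => ?_
  obtain ⟨u, hu, -, -, hc⟩ := walk_reach hBC hab hcross hX w hqB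
  rcases hc hpB with h | h
  · exact Or.inl (h ▸ hu.1)
  · exact Or.inr (h ▸ hu.1)

end TwoCut

/-- Edges of `G` with both endpoints in `A`. -/
def inEdges {V : Type*} (G : SimpleGraph V) (A : Set V) : Set (Sym2 V) :=
  {e | e ∈ G.edgeSet ∧ ∀ v ∈ e, v ∈ A}

/-- A Petersen minor with all branch sets inside `A`. -/
def MinorInside {V : Type*} (G : SimpleGraph V) (A : Set V) : Prop :=
  ∃ f : PV → Set V,
    (∀ w, f w ⊆ A) ∧
    (∀ w, (G.induce (f w)).Connected) ∧
    (∀ w₁ w₂ : PV, w₁ ≠ w₂ → Disjoint (f w₁) (f w₂)) ∧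
    ∀ ⦃w₁ w₂ : PV⦄, Petersen.Adj w₁ w₂ → ∃ v₁ ∈ f w₁, ∃ v₂ ∈ f w₂, G.Adj v₁ v₂

section MinorPush
variable {V : Type*} {G : SimpleGraph V} {B C : Set V} {a b : V}

lemma minor_push (hBC : B ∩ C = {a, b}) (hab : G.Adj a b)
    (hcross : ∀ x ∈ B \ C, ∀ y ∈ C \ B, ¬ G.Adj x y)
    (f : PV → Set V) (hsub : ∀ w, f w ⊆ B ∪ C)
    (hconn : ∀ w, (G.induce (f w)).Connected)
    (hdisj : ∀ w₁ w₂ : PV, w₁ ≠ w₂ → Disjoint (f w₁) (f w₂))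
    (hedge : ∀ ⦃w₁ w₂ : PV⦄, Petersen.Adj w₁ w₂ → ∃ v₁ ∈ f w₁, ∃ v₂ ∈ f w₂, G.Adj v₁ v₂)
    (hside : ∀ w, ¬ (a ∈ f w ∨ b ∈ f w) → f w ⊆ B) :
    MinorInside G B := by
  have haB : a ∈ B := by
    have : a ∈ B ∩ C := by rw [hBC]; simp
    exact this.1
  have hbB : b ∈ B := by
    have : b ∈ B ∩ C := by rw [hBC]; simp
    exact this.1
  refine ⟨fun w => f w ∩ B, fun w => Set.inter_subset_right, ?_, ?_, ?_⟩
  · intro w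
    refine conn_inter hBC hab hcross (hsub w) (hconn w) ?_
    by_cases hS : a ∈ f w ∨ b ∈ f w
    · rcases hS with h | h
      · exact ⟨a, h, haB⟩
      · exact ⟨b, h, hbB⟩
    · obtain ⟨⟨v, hv⟩⟩ := (hconn w).nonempty
      exact ⟨v, hv, hside w hS hv⟩
  · intro w₁ w₂ hne
    exact (hdisj w₁ w₂ hne).mono Set.inter_subset_left Set.inter_subset_left
  · intro w₁ w₂ hadj
    obtain ⟨v₁, hv₁, v₂, hv₂, hGv⟩ := hedge hadj
    have hne : w₁ ≠ w₂ := hadj.ne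
    by_cases h1 : v₁ ∈ B
    · by_cases h2 : v₂ ∈ B
      · exact ⟨v₁, ⟨hv₁, h1⟩, v₂, ⟨hv₂, h2⟩, hGv⟩
      · -- v₂ ∈ C \ B, so v₁ ∈ {a,b} and w₂ is special; both special
        have hv₂C : v₂ ∈ C \ B := ⟨(hsub w₂ hv₂).resolve_left h2, h2⟩
        have hv₁ab : v₁ ∈ B ∩ C := by
          by_contra hc
          exact hcross _ ⟨h1, fun h => hc ⟨h1, h⟩⟩ _ hv₂C hGv
        rw [hBC] at hv₁ab
        have hS1 : a ∈ f w₁ ∨ b ∈ f w₁ := by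
          rcases hv₁ab with h | h
          · exact Or.inl (h ▸ hv₁)
          · exact Or.inr (h ▸ hv₁)
        have hS2 : a ∈ f w₂ ∨ b ∈ f w₂ := by
          by_contra hc
          exact h2 (hside w₂ hc hv₂)
        rcases hS1 with hA1 | hB1 <;> rcases hS2 with hA2 | hB2
        · exact absurd hA2 (Set.disjoint_left.mp (hdisj w₁ w₂ hne) hA1)
        · exact ⟨a, ⟨hA1, haB⟩, b, ⟨hB2, hbB⟩, hab⟩
        · exact ⟨b, ⟨hB1, hbB⟩, a, ⟨hA2, haB⟩, hab.symm⟩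
        · exact absurd hB2 (Set.disjoint_left.mp (hdisj w₁ w₂ hne) hB1)
    · -- v₁ ∈ C \ B
      have hv₁C : v₁ ∈ C \ B := ⟨(hsub w₁ hv₁).resolve_left h1, h1⟩
      have hS1 : a ∈ f w₁ ∨ b ∈ f w₁ := by
        by_contra hc
        exact h1 (hside w₁ hc hv₁)
      have hS2 : a ∈ f w₂ ∨ b ∈ f w₂ := by
        by_contra hc
        have hv₂B : v₂ ∈ B := hside w₂ hc hv₂
        have : v₂ ∈ B ∩ C := by
          by_contra hcc
          exact hcross _ ⟨hv₂B, fun h => hcc ⟨hv₂B, h⟩⟩ _ hv₁C hGv.symm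
        rw [hBC] at this
        rcases this with h | h
        · exact hc (Or.inl (h ▸ hv₂))
        · exact hc (Or.inr (h ▸ hv₂))
      rcases hS1 with hA1 | hB1 <;> rcases hS2 with hA2 | hB2
      · exact absurd hA2 (Set.disjoint_left.mp (hdisj w₁ w₂ hne) hA1)
      · exact ⟨a, ⟨hA1, haB⟩, b, ⟨hB2, hbB⟩, hab⟩
      · exact ⟨b, ⟨hB1, hbB⟩, a, ⟨hA2, haB⟩, hab.symm⟩
      · exact absurd hB2 (Set.disjoint_left.mp (hdisj w₁ w₂ hne) hB1)

end MinorPush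

lemma card_PV : Fintype.card PV = 10 := by decide

/-- The main induction. -/
lemma cockade_main {V : Type} [Fintype V] (G : SimpleGraph V) (A : Set V)
    (h : CockadeOn G 9 2 A) :
    ((inEdges G A).ncard : ℤ) = 5 * (A.ncard : ℤ) - 9 ∧ ¬ MinorInside G A := by
  induction h with
  | base A hcard hclique =>
    constructor
    · -- edge count of a 9-clique
      have hfin : A.Finite := Set.toFinite A
      haveI : Fintype ↥A := hfin.fintype
      have hA9 : Fintype.card ↥A = 9 := by
        rw [← Nat.card_eq_fintype_card, Nat.card_coe_set_eq, hcard]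
      let g : ↥A ≃ Fin 9 := Fintype.equivFinOfCardEq hA9
      set φ : Fin 9 → V := fun i => ((g.symm i : ↥A) : V) with hφ
      have hφinj : Function.Injective φ :=
        Subtype.val_injective.comp g.symm.injective
      have himg : inEdges G A = Sym2.map φ '' (⊤ : SimpleGraph (Fin 9)).edgeSet := by
        ext e
        constructor
        · rintro ⟨he, hmem⟩
          obtain ⟨⟨x, y⟩, rfl⟩ := e.exists_rep
          have hx : x ∈ A := hmem x (Sym2.mem_mk_left x y)
          have hy : y ∈ A := hmem y (Sym2.mem_mk_right x y)
          have hadj : G.Adj x y := he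
          refine ⟨s(g ⟨x, hx⟩, g ⟨y, hy⟩), ?_, ?_⟩
          · rw [SimpleGraph.mem_edgeSet, top_adj]
            exact fun hc => hadj.ne (congrArg Subtype.val (g.injective hc))
          · simp only [Sym2.map_pair_eq, hφ, Equiv.symm_apply_apply]
        · rintro ⟨e', he', rfl⟩
          obtain ⟨⟨i, j⟩, rfl⟩ := e'.exists_rep
          rw [SimpleGraph.mem_edgeSet, top_adj] at he'
          rw [Sym2.map_pair_eq]
          refine ⟨?_, ?_⟩
          · rw [SimpleGraph.mem_edgeSet]
            exact ((isClique_iff G).mp hclique) (g.symm i).2 (g.symm j).2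
              (fun hc => he' (g.symm.injective (Subtype.ext hc)))
          · intro v hv
            rcases Sym2.mem_iff.mp hv with h | h
            · exact h ▸ (g.symm i).2
            · exact h ▸ (g.symm j).2
      rw [himg, Set.ncard_image_of_injective _ (Sym2.map.injective hφinj)]
      have : ((⊤ : SimpleGraph (Fin 9)).edgeSet).ncard = 36 := by
        rw [Set.ncard_eq_toFinset_card']
        have h36 : ((⊤ : SimpleGraph (Fin 9)).edgeSet).toFinset
            = (⊤ : SimpleGraph (Fin 9)).edgeFinset := rfl
        rw [h36, card_edgeFinset_top_eq_card_choose_two]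
        decide
      rw [this, hcard]
      norm_num
    · -- no room for ten disjoint branch sets
      rintro ⟨f, hsub, hconn, hdisj, -⟩
      have hr : ∀ w, ∃ v, v ∈ f w := by
        intro w
        obtain ⟨⟨v, hv⟩⟩ := (hconn w).nonempty
        exact ⟨v, hv⟩
      choose r hrmem using hr
      have hrinj : Function.Injective r := by
        intro w₁ w₂ he
        by_contra hne
        exact Set.disjoint_left.mp (hdisj w₁ w₂ hne) (hrmem w₁) (he ▸ hrmem w₂)
      have hrange : Set.range r ⊆ A := by
        rintro v ⟨w, rfl⟩
        exact hsub w (hrmem w)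
      have h10 : (Set.range r).ncard = 10 := by
        rw [← Set.image_univ, Set.ncard_image_of_injective _ hrinj, Set.ncard_univ,
          Nat.card_eq_fintype_card, card_PV]
      have := Set.ncard_le_ncard hrange (Set.toFinite A)
      rw [h10, hcard] at this
      omega
  | glue A B C hun hB hC hcard2 hclique2 hcross h1 h2 ih1 ih2 =>
    obtain ⟨a, b, hne_ab, hBC⟩ := Set.ncard_eq_two.mp hcard2
    have haBC : a ∈ B ∩ C := by rw [hBC]; simp
    have hbBC : b ∈ B ∩ C := by rw [hBC]; simp
    have hab : G.Adj a b := ((isClique_iff G).mp hclique2) haBC hbBC hne_ab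
    constructor
    · -- edge count
      have hE1 : inEdges G A = inEdges G B ∪ inEdges G C := by
        ext e
        constructor
        · rintro ⟨he, hmem⟩
          obtain ⟨⟨x, y⟩, rfl⟩ := e.exists_rep
          have hadj : G.Adj x y := he
          have hx : x ∈ B ∪ C := hun ▸ hmem x (Sym2.mem_mk_left x y)
          have hy : y ∈ B ∪ C := hun ▸ hmem y (Sym2.mem_mk_right x y)
          have hmemBC : (x ∈ B ∧ y ∈ B) ∨ (x ∈ C ∧ y ∈ C) := by
            rcases hx with hxB | hxC
            · by_cases hyB : y ∈ B
              · exact Or.inl ⟨hxB, hyB⟩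
              · have hyC : y ∈ C \ B := ⟨hy.resolve_left hyB, hyB⟩
                have hxC : x ∈ C := by
                  by_contra hc
                  exact hcross x ⟨hxB, hc⟩ y hyC hadj
                exact Or.inr ⟨hxC, hyC.1⟩
            · by_cases hyC : y ∈ C
              · exact Or.inr ⟨hxC, hyC⟩
              · have hyB : y ∈ B \ C := ⟨hy.resolve_right hyC, hyC⟩
                have hxB : x ∈ B := by
                  by_contra hc
                  exact hcross y hyB x ⟨hxC, hc⟩ hadj.symm
                exact Or.inl ⟨hxB, hyB.1⟩
          rcases hmemBC with ⟨h1', h2'⟩ | ⟨h1', h2'⟩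
          · refine Or.inl ⟨he, ?_⟩
            intro v hv
            rcases Sym2.mem_iff.mp hv with h | h
            · exact h ▸ h1'
            · exact h ▸ h2'
          · refine Or.inr ⟨he, ?_⟩
            intro v hv
            rcases Sym2.mem_iff.mp hv with h | h
            · exact h ▸ h1'
            · exact h ▸ h2'
        · rintro (⟨he, hmem⟩ | ⟨he, hmem⟩)
          · exact ⟨he, fun v hv => hun ▸ Or.inl (hmem v hv)⟩
          · exact ⟨he, fun v hv => hun ▸ Or.inr (hmem v hv)⟩
      have hE2 : inEdges G B ∩ inEdges G C = {s(a, b)} := by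
        ext e
        constructor
        · rintro ⟨⟨he, hmemB⟩, ⟨-, hmemC⟩⟩
          obtain ⟨⟨x, y⟩, rfl⟩ := e.exists_rep
          have hadj : G.Adj x y := he
          have hx : x ∈ B ∩ C := ⟨hmemB x (Sym2.mem_mk_left x y), hmemC x (Sym2.mem_mk_left x y)⟩
          have hy : y ∈ B ∩ C := ⟨hmemB y (Sym2.mem_mk_right x y), hmemC y (Sym2.mem_mk_right x y)⟩
          rw [hBC] at hx hy
          have hxy : x ≠ y := hadj.ne
          simp only [Set.mem_singleton_iff]
          rcases hx with rfl | rfl <;> rcases hy with rfl | rfl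
          · exact absurd rfl hxy
          · rfl
          · exact Sym2.eq_swap
          · exact absurd rfl hxy
        · rintro rfl
          refine ⟨⟨hab, ?_⟩, ⟨hab, ?_⟩⟩ <;>
          · intro v hv
            rcases Sym2.mem_iff.mp hv with h | h
            · exact h ▸ (by first | exact haBC.1 | exact haBC.2)
            · exact h ▸ (by first | exact hbBC.1 | exact hbBC.2)
      have hcount := Set.ncard_union_add_ncard_inter (inEdges G B) (inEdges G C)
        (Set.toFinite _) (Set.toFinite _)
      have hvert := Set.ncard_union_add_ncard_inter B C (Set.toFinite _) (Set.toFinite _)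
      rw [hun, hcard2] at hvert
      rw [hE2, Set.ncard_singleton] at hcount
      rw [hE1]
      have e1 := ih1.1
      have e2 := ih2.1
      have hc' : ((inEdges G B ∪ inEdges G C).ncard : ℤ) + 1
          = ((inEdges G B).ncard : ℤ) + ((inEdges G C).ncard : ℤ) := by exact_mod_cast hcount
      have hv' : (A.ncard : ℤ) + 2 = (B.ncard : ℤ) + (C.ncard : ℤ) := by exact_mod_cast hvert
      linarith
    · -- no Petersen minor
      rintro ⟨f, hsubA, hconn, hdisj, hedge⟩
      have hsub : ∀ w, f w ⊆ B ∪ C := fun w => hun ▸ hsubA w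
      set Spec : PV → Prop := fun w => a ∈ f w ∨ b ∈ f w with hSpec
      have hfne : ∀ w, ∃ v, v ∈ f w := by
        intro w
        obtain ⟨⟨v, hv⟩⟩ := (hconn w).nonempty
        exact ⟨v, hv⟩
      have hdich : ∀ w, ¬ Spec w → f w ⊆ B \ C ∨ f w ⊆ C \ B := by
        intro w hS
        have hsub' : f w ⊆ (B \ C) ∪ (C \ B) := by
          intro v hv
          rcases hsub w hv with hvB | hvC
          · by_cases hvC' : v ∈ C
            · exfalso
              have : v ∈ B ∩ C := ⟨hvB, hvC'⟩
              rw [hBC] at this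
              rcases this with rfl | rfl
              · exact hS (Or.inl hv)
              · exact hS (Or.inr hv)
            · exact Or.inl ⟨hvB, hvC'⟩
          · by_cases hvB' : v ∈ B
            · exfalso
              have : v ∈ B ∩ C := ⟨hvB', hvC⟩
              rw [hBC] at this
              rcases this with rfl | rfl
              · exact hS (Or.inl hv)
              · exact hS (Or.inr hv)
            · exact Or.inr ⟨hvC, hvB'⟩
        by_cases hmeet : ∃ v ∈ f w, v ∈ C \ B
        · right
          intro v hv
          rcases hsub' hv with hvB | hvC
          · exfalso
            obtain ⟨p, hp, hpC⟩ := hmeet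
            rcases straddle hBC hab hcross (hsub w) (hconn w) hp hpC.2 hv hvB.1 with h | h
            · exact hS (Or.inl h)
            · exact hS (Or.inr h)
          · exact hvC
        · left
          intro v hv
          rcases hsub' hv with hvB | hvC
          · exact hvB
          · exact absurd ⟨v, hv, hvC⟩ hmeet
      by_cases case1 : ∀ w, ¬ Spec w → f w ⊆ B
      · exact ih1.2 (minor_push hBC hab hcross f hsub hconn hdisj hedge case1)
      by_cases case2 : ∀ w, ¬ Spec w → f w ⊆ C
      · have hBC' : C ∩ B = {a, b} := by rw [Set.inter_comm]; exact hBC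
        have hcross' : ∀ x ∈ C \ B, ∀ y ∈ B \ C, ¬ G.Adj x y :=
          fun x hx y hy hadj => hcross y hy x hx hadj.symm
        have hsub' : ∀ w, f w ⊆ C ∪ B := fun w => (Set.union_comm B C) ▸ hsub w
        exact ih2.2 (minor_push hBC' hab hcross' f hsub' hconn hdisj hedge case2)
      -- both sides occupied: contradiction with 3-connectivity of Petersen
      push_neg at case1 case2
      obtain ⟨w₁, hw₁S, hw₁⟩ := case1
      obtain ⟨w₂, hw₂S, hw₂⟩ := case2
      have hfw₁ : f w₁ ⊆ C \ B := by
        rcases hdich w₁ hw₁S with h | h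
        · exact absurd (h.trans Set.diff_subset) hw₁
        · exact h
      have hfw₂ : f w₂ ⊆ B \ C := by
        rcases hdich w₂ hw₂S with h | h
        · exact h
        · exact absurd (h.trans Set.diff_subset) hw₂
      -- the at most two special vertices
      classical
      set z₁ : PV := if h : ∃ w, a ∈ f w then h.choose else w₁ with hz₁
      set z₂ : PV := if h : ∃ w, b ∈ f w then h.choose else w₁ with hz₂
      have hza : ∀ w, a ∈ f w → w = z₁ := by
        intro w ha
        have hex : ∃ w, a ∈ f w := ⟨w, ha⟩
        rw [hz₁, dif_pos hex]
        by_contra hne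
        exact Set.disjoint_left.mp (hdisj w _ hne) ha hex.choose_spec
      have hzb : ∀ w, b ∈ f w → w = z₂ := by
        intro w hb
        have hex : ∃ w, b ∈ f w := ⟨w, hb⟩
        rw [hz₂, dif_pos hex]
        by_contra hne
        exact Set.disjoint_left.mp (hdisj w _ hne) hb hex.choose_spec
      refine petersen_sep {w | f w ⊆ B \ C} {w | Spec w} ⟨z₁, z₂, ?_⟩ w₂ w₁ hfw₂ hw₂S ?_ hw₁S ?_
      · rintro w (ha | hb)
        · exact Or.inl (hza w ha)
        · exact Or.inr (hzb w hb)
      · intro hc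
        obtain ⟨v, hv⟩ := hfne w₁
        exact (hc hv).2 (hfw₁ hv).1
      · intro u v hu hv huS hvS hadj
        have hfv : f v ⊆ C \ B := by
          rcases hdich v hvS with h | h
          · exact absurd h hv
          · exact h
        obtain ⟨p, hp, q, hq, hpq⟩ := hedge hadj
        exact hcross p (hu hp) q (hfv hq) hpq

/-- Every `(K_9,2)`-cockade on `n` vertices has exactly `5n - 9` edges
and does not contain the Petersen graph as a minor. -/
theorem k9_cockade_edges_and_petersen_free {V : Type} [Fintype V] (G : SimpleGraph V)
    (hG : IsK9Cockade G) :
    (edgeCount G : ℤ) = 5 * (Nat.card V : ℤ) - 9 ∧ ¬ IsMinor Petersen G := by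
  have h := cockade_main G Set.univ hG
  constructor
  · have huniv : inEdges G Set.univ = G.edgeSet := by
      ext e
      simp [inEdges]
    have hec : edgeCount G = (G.edgeSet).ncard := by
      rw [edgeCount, Nat.card_coe_set_eq]
    have hnv : (Set.univ : Set V).ncard = Nat.card V := Set.ncard_univ V
    rw [hec, ← huniv, ← hnv]
    exact h.1
  · rintro ⟨f, hconn, hdisj, hedge⟩
    exact h.2 ⟨f, fun w => Set.subset_univ _, hconn, hdisj, hedge⟩
end

section
/- Let x, y and z be distinct vertices of a graph H. There is a K_3-minor of H rooted at {x,y,z} if and only if there is no vertex v ∈ V(H) for which the vertices of {x,y,z} ∖ {v} lie in distinct connected components of H − v. -/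
open SimpleGraph

namespace K3Aux

variable {V : Type*} {H : SimpleGraph V}

/-- Reachable via a walk whose support stays in `S`. -/
def WalkIn (H : SimpleGraph V) (S : Set V) (a b : V) : Prop :=
  ∃ w : H.Walk a b, ∀ v ∈ w.support, v ∈ S

lemma WalkIn.mono {S T : Set V} (h : S ⊆ T) {a b : V} :
    WalkIn H S a b → WalkIn H T a b := fun ⟨w, hw⟩ => ⟨w, fun v hv => h (hw v hv)⟩

lemma WalkIn.start_mem {S : Set V} {a b : V} (h : WalkIn H S a b) : a ∈ S := by
  obtain ⟨w, hw⟩ := h; exact hw a w.start_mem_support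

lemma WalkIn.end_mem {S : Set V} {a b : V} (h : WalkIn H S a b) : b ∈ S := by
  obtain ⟨w, hw⟩ := h; exact hw b w.end_mem_support

lemma WalkIn.refl {S : Set V} {a : V} (ha : a ∈ S) : WalkIn H S a a :=
  ⟨Walk.nil, by simpa using ha⟩

lemma WalkIn.symm {S : Set V} {a b : V} (h : WalkIn H S a b) : WalkIn H S b a := by
  obtain ⟨w, hw⟩ := h
  exact ⟨w.reverse, fun v hv => hw v (by simpa [Walk.support_reverse] using hv)⟩

lemma WalkIn.trans {S : Set V} {a b c : V} (h1 : WalkIn H S a b) (h2 : WalkIn H S b c) :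
    WalkIn H S a c := by
  obtain ⟨w1, hw1⟩ := h1; obtain ⟨w2, hw2⟩ := h2
  refine ⟨w1.append w2, fun v hv => ?_⟩
  rcases (Walk.mem_support_append_iff _ _).mp hv with h | h
  · exact hw1 v h
  · exact hw2 v h

lemma WalkIn.single {S : Set V} {a b : V} (h : H.Adj a b) (ha : a ∈ S) (hb : b ∈ S) :
    WalkIn H S a b :=
  ⟨Walk.cons h Walk.nil, by simp [ha, hb]⟩

lemma reachable_induce_of_walkIn {S : Set V} {a b : V} (h : WalkIn H S a b)
    (ha : a ∈ S) (hb : b ∈ S) : (H.induce S).Reachable ⟨a, ha⟩ ⟨b, hb⟩ := by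
  obtain ⟨w, hw⟩ := h
  induction w with
  | nil => exact Reachable.refl _
  | @cons u u' d hadj p ih =>
    have hu' : u' ∈ S := hw u' (by simp)
    have step : (H.induce S).Adj ⟨u, ha⟩ ⟨u', hu'⟩ := by
      simpa [SimpleGraph.induce] using hadj
    exact (step.reachable).trans (ih hu' hb (fun v hv => hw v (by simp [hv])))

lemma walkIn_of_reachable_induce {S : Set V} {a b : S}
    (h : (H.induce S).Reachable a b) : WalkIn H S a.1 b.1 := by
  obtain ⟨w⟩ := h
  induction w with
  | @nil u => exact WalkIn.refl u.2
  | @cons u u' d hadj p ih =>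
    have hadj' : H.Adj u.1 u'.1 := by simpa [SimpleGraph.induce] using hadj
    exact (WalkIn.single hadj' u.2 u'.2).trans ih

lemma connOn_iff {S : Set V} :
    (H.induce S).Connected ↔ S.Nonempty ∧ ∀ a ∈ S, ∀ b ∈ S, WalkIn H S a b := by
  constructor
  · intro hc
    refine ⟨Set.nonempty_coe_sort.mp hc.nonempty, fun a ha b hb => ?_⟩
    exact walkIn_of_reachable_induce (hc.preconnected ⟨a, ha⟩ ⟨b, hb⟩)
  · rintro ⟨⟨a0, ha0⟩, h⟩
    rw [connected_iff]
    refine ⟨fun u v => ?_, ⟨⟨a0, ha0⟩⟩⟩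
    have := reachable_induce_of_walkIn (h u.1 u.2 v.1 v.2) u.2 v.2
    simpa using this

lemma connOn_singleton (a : V) : (H.induce ({a} : Set V)).Connected := by
  rw [connOn_iff]
  exact ⟨⟨a, rfl⟩, by rintro p rfl q rfl; exact WalkIn.refl rfl⟩

lemma connOn_insert {S : Set V} {a0 u : V} (hS : (H.induce S).Connected)
    (ha0 : a0 ∈ S) (hadj : H.Adj u a0) : (H.induce (insert u S)).Connected := by
  rw [connOn_iff] at hS ⊢
  obtain ⟨hne, h⟩ := hS
  have key : ∀ p ∈ insert u S, WalkIn H (insert u S) p a0 := by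
    rintro p (rfl | hp)
    · exact WalkIn.single hadj (Set.mem_insert _ _) (Set.mem_insert_of_mem _ ha0)
    · exact (h p hp a0 ha0).mono (Set.subset_insert _ _)
  exact ⟨⟨a0, Set.mem_insert_of_mem _ ha0⟩,
    fun p hp q hq => (key p hp).trans (key q hq).symm⟩

/-- adjacency between sets, in the exact shape of the goal -/
def AdjS (H : SimpleGraph V) (A B : Set V) : Prop := ∃ p ∈ A, ∃ q ∈ B, H.Adj p q

lemma AdjS.symm {A B : Set V} (h : AdjS H A B) : AdjS H B A := by
  obtain ⟨p, hp, q, hq, h⟩ := h; exact ⟨q, hq, p, hp, h.symm⟩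

lemma AdjS.mono_left {A A' B : Set V} (h : AdjS H A B) (hA : A ⊆ A') : AdjS H A' B := by
  obtain ⟨p, hp, q, hq, h⟩ := h; exact ⟨p, hA hp, q, hq, h⟩

lemma AdjS.mono_right {A B B' : Set V} (h : AdjS H A B) (hB : B ⊆ B') : AdjS H A B' := by
  obtain ⟨p, hp, q, hq, h⟩ := h; exact ⟨p, hp, q, hB hq, h⟩

/-- the target configuration -/
def Config (H : SimpleGraph V) (x y z : V) : Prop :=
  ∃ X Y Z : Set V,
    (H.induce X).Connected ∧ (H.induce Y).Connected ∧ (H.induce Z).Connected ∧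
    Disjoint X Y ∧ Disjoint X Z ∧ Disjoint Y Z ∧
    (∃ a ∈ X, ∃ b ∈ Y, H.Adj a b) ∧
    (∃ a ∈ X, ∃ b ∈ Z, H.Adj a b) ∧
    (∃ a ∈ Y, ∃ b ∈ Z, H.Adj a b) ∧
    x ∈ X ∧ y ∈ Y ∧ z ∈ Z

lemma Config.swap12 {x y z : V} (h : Config H x y z) : Config H y x z := by
  obtain ⟨X, Y, Z, c1, c2, c3, d1, d2, d3, a1, a2, a3, m1, m2, m3⟩ := h
  exact ⟨Y, X, Z, c2, c1, c3, d1.symm, d3, d2, AdjS.symm a1, a3, a2, m2, m1, m3⟩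

lemma Config.swap23 {x y z : V} (h : Config H x y z) : Config H x z y := by
  obtain ⟨X, Y, Z, c1, c2, c3, d1, d2, d3, a1, a2, a3, m1, m2, m3⟩ := h
  exact ⟨X, Z, Y, c1, c3, c2, d2, d1, d3.symm, a2, a1, AdjS.symm a3, m1, m3, m2⟩


lemma disj_insert {A D : Set V} {u : V} (h : Disjoint A D) (hu : u ∉ D) :
    Disjoint (insert u A) D := by
  rw [Set.disjoint_left]
  rintro v (rfl | hv) hvD
  · exact hu hvD
  · exact Set.disjoint_left.mp h hv hvD

lemma absorb {D U : Set V} {a d : V} (w : H.Walk a d) :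
    ∀ A : Set V, (H.induce A).Connected → a ∈ A → d ∈ D → Disjoint A D → Disjoint A U →
    (∀ v ∈ w.support, v ∉ U) →
    ∃ A' : Set V, A ⊆ A' ∧ (H.induce A').Connected ∧ Disjoint A' D ∧ Disjoint A' U ∧
      AdjS H A' D := by
  induction w with
  | @nil u =>
    intro A _ ha hd hAD _ _
    exact absurd hd (Set.disjoint_left.mp hAD ha)
  | @cons u u' d hadj p ih =>
    intro A hconn ha hd hAD hAU hU
    by_cases hq : u' ∈ D
    · exact ⟨A, subset_rfl, hconn, hAD, hAU, u, ha, u', hq, hadj⟩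
    by_cases hu'A : u' ∈ A
    · exact ih A hconn hu'A hd hAD hAU (fun v hv => hU v (by simp [hv]))
    · have hu'U : u' ∉ U := hU u' (by simp)
      obtain ⟨A', hsub, hc, h1, h2, h3⟩ :=
        ih (insert u' A) (connOn_insert hconn ha hadj.symm) (Set.mem_insert _ _) hd
          (disj_insert hAD hq)
          (disj_insert hAU hu'U)
          (fun v hv => hU v (by simp [hv]))
      exact ⟨A', (Set.subset_insert _ _).trans hsub, hc, h1, h2, h3⟩


lemma tripod2 {A B C : Set V} {ra rb rc u : V}
    (hA : (H.induce A).Connected) (hB : (H.induce B).Connected)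
    (hC : (H.induce C).Connected)
    (hra : ra ∈ A) (hrb : rb ∈ B) (hrc : rc ∈ C)
    (dAB : Disjoint A B) (dAC : Disjoint A C) (dBC : Disjoint B C)
    (huA : u ∉ A) (huB : u ∉ B) (huC : u ∉ C)
    (auA : ∃ p ∈ A, H.Adj u p) (auB : ∃ p ∈ B, H.Adj u p) (auC : ∃ p ∈ C, H.Adj u p)
    (hw : WalkIn H {x | x ≠ u} ra rb) : Config H ra rb rc := by
  obtain ⟨w, hwsup⟩ := hw
  obtain ⟨A', hsub, hc, hdisj, hdisjU, p, hp, q, hq, hpq⟩ :=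
    absorb (D := B ∪ C) (U := {u}) w A hA hra (Or.inl hrb)
      (Set.disjoint_union_right.mpr ⟨dAB, dAC⟩)
      (Set.disjoint_singleton_right.mpr huA)
      (fun v hv => by simpa using hwsup v hv)
  have huA' : u ∉ A' := Set.disjoint_singleton_right.mp hdisjU
  have hdA'B : Disjoint A' B := (Set.disjoint_union_right.mp hdisj).1
  have hdA'C : Disjoint A' C := (Set.disjoint_union_right.mp hdisj).2
  obtain ⟨pa, hpa, hapa⟩ := auA
  obtain ⟨pb, hpb, hapb⟩ := auB
  obtain ⟨pc, hpc, hapc⟩ := auC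
  rcases hq with hqB | hqC
  · -- config (A', B, insert u C)
    refine ⟨A', B, insert u C, hc, hB, connOn_insert hC hpc hapc, hdA'B,
      (disj_insert hdA'C.symm huA').symm, (disj_insert dBC.symm huB).symm,
      ⟨p, hp, q, hqB, hpq⟩,
      ⟨pa, hsub hpa, u, Set.mem_insert _ _, hapa.symm⟩,
      ⟨pb, hpb, u, Set.mem_insert _ _, hapb.symm⟩,
      hsub hra, hrb, Set.mem_insert_of_mem _ hrc⟩
  · -- config (A', insert u B, C)
    refine ⟨A', insert u B, C, hc, connOn_insert hB hpb hapb, hC,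
      (disj_insert hdA'B.symm huA').symm, hdA'C,
      disj_insert dBC huC,
      ⟨pa, hsub hpa, u, Set.mem_insert _ _, hapa.symm⟩,
      ⟨p, hp, q, hqC, hpq⟩,
      ⟨u, Set.mem_insert _ _, pc, hpc, hapc⟩,
      hsub hra, Set.mem_insert_of_mem _ hrb, hrc⟩


lemma tripodAny {A B C : Set V} {ra rb rc u : V}
    (hA : (H.induce A).Connected) (hB : (H.induce B).Connected)
    (hC : (H.induce C).Connected)
    (hra : ra ∈ A) (hrb : rb ∈ B) (hrc : rc ∈ C)
    (dAB : Disjoint A B) (dAC : Disjoint A C) (dBC : Disjoint B C)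
    (huA : u ∉ A) (huB : u ∉ B) (huC : u ∉ C)
    (auA : ∃ p ∈ A, H.Adj u p) (auB : ∃ p ∈ B, H.Adj u p) (auC : ∃ p ∈ C, H.Adj u p)
    (hw : ∃ p q : V, (p = ra ∨ p = rb ∨ p = rc) ∧ (q = ra ∨ q = rb ∨ q = rc) ∧
      p ≠ q ∧ WalkIn H {x | x ≠ u} p q) : Config H ra rb rc := by
  obtain ⟨p, q, hp, hq, hpq, hw⟩ := hw
  rcases hp with rfl | rfl | rfl <;> rcases hq with rfl | rfl | rfl
  · exact absurd rfl hpq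
  · exact tripod2 hA hB hC hra hrb hrc dAB dAC dBC huA huB huC auA auB auC hw
  · exact (tripod2 hA hC hB hra hrc hrb dAC dAB dBC.symm huA huC huB auA auC auB hw).swap23
  · exact tripod2 hA hB hC hra hrb hrc dAB dAC dBC huA huB huC auA auB auC hw.symm
  · exact absurd rfl hpq
  · exact ((tripod2 hB hC hA hrb hrc hra dBC dAB.symm dAC.symm huB huC huA auB auC
      auA hw).swap23).swap12
  · exact (tripod2 hA hC hB hra hrc hrb dAC dAB dBC.symm huA huC huB auA auC auB hw.symm).swap23
  · exact ((tripod2 hB hC hA hrb hrc hra dBC dAB.symm dAC.symm huB huC huA auB auC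
      auA hw.symm).swap23).swap12
  · exact absurd rfl hpq


lemma removable {M : Set V} {a : V} (hMfin : M.Finite) (hM : (H.induce M).Connected)
    (ha : a ∈ M) (hnt : ∃ b ∈ M, b ≠ a) :
    ∃ u ∈ M, u ≠ a ∧ (H.induce (M \ {u})).Connected ∧ ∃ m ∈ M \ {u}, H.Adj u m := by
  classical
  have hMwalk := (connOn_iff.mp hM).2
  set P : V → ℕ → Prop := fun v n => ∃ w : H.Walk a v, (∀ x ∈ w.support, x ∈ M) ∧ w.length = n
    with hP
  have hex : ∀ v ∈ M, ∃ n, P v n := by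
    intro v hv
    obtain ⟨w, hw⟩ := hMwalk a ha v hv
    exact ⟨w.length, w, hw, rfl⟩
  set f : V → ℕ := fun v => if h : ∃ n, P v n then Nat.find h else 0 with hf
  have key : ∀ v ∈ M, P v (f v) ∧ ∀ m, P v m → f v ≤ m := by
    intro v hv
    have h := hex v hv
    rw [hf]; simp only [dif_pos h]
    exact ⟨Nat.find_spec h, fun m hm => Nat.find_min' h hm⟩
  have hfa : f a = 0 := by
    have h0 : P a 0 := ⟨Walk.nil, by simpa using ha, rfl⟩
    exact Nat.le_zero.mp ((key a ha).2 0 h0)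
  obtain ⟨u, huM, humax⟩ := Set.exists_max_image M f hMfin ⟨a, ha⟩
  obtain ⟨b, hbM, hba⟩ := hnt
  have hfb : 1 ≤ f b := by
    rcases Nat.eq_zero_or_pos (f b) with h0 | h1
    · obtain ⟨w, _, hwl⟩ := (key b hbM).1
      rw [h0] at hwl
      exact absurd (Walk.eq_of_length_eq_zero hwl).symm hba
    · exact h1
  have hua : u ≠ a := by
    intro heq
    have := humax b hbM
    rw [heq, hfa] at this
    omega
  have reach : ∀ v ∈ M, v ≠ u → WalkIn H (M \ {u}) a v := by
    intro v hv hvu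
    obtain ⟨w, hsupp, hlen⟩ := (key v hv).1
    have hu : u ∉ w.support := by
      intro husup
      have hsplit := w.take_spec husup
      have hlen2 : (w.takeUntil u husup).length + (w.dropUntil u husup).length = w.length := by
        conv_rhs => rw [← hsplit]
        exact (Walk.length_append _ _).symm
      have hfu : f u ≤ (w.takeUntil u husup).length :=
        (key u huM).2 _ ⟨w.takeUntil u husup,
          fun x hx => hsupp x (Walk.support_takeUntil_subset _ husup hx), rfl⟩
      have h2len : 1 ≤ (w.dropUntil u husup).length := by
        rcases Nat.eq_zero_or_pos (w.dropUntil u husup).length with h0 | h1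
        · exact absurd (Walk.eq_of_length_eq_zero h0).symm hvu
        · exact h1
      have hmax := humax v hv
      omega
    refine ⟨w, fun x hx => ⟨hsupp x hx, fun heq => hu (heq ▸ hx)⟩⟩
  have haMu : a ∈ M \ {u} := ⟨ha, fun h => hua (h.symm)⟩
  refine ⟨u, huM, hua, ?_, ?_⟩
  · rw [connOn_iff]
    refine ⟨⟨a, haMu⟩, fun p hp q hq => ?_⟩
    exact (reach p hp.1 (fun h => hp.2 h)).symm.trans (reach q hq.1 (fun h => hq.2 h))
  · obtain ⟨w, hw⟩ := hMwalk u huM a ha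
    cases w with
    | nil => exact absurd rfl hua
    | @cons _ u' _ hadj p =>
      exact ⟨u', ⟨hw u' (by simp), fun h => hadj.ne' h⟩, hadj⟩


lemma main (a b c : V)
    (hypA : WalkIn H {t | t ≠ a} b c)
    (hypU : ∀ u : V, u ≠ a → u ≠ b → u ≠ c →
      ∃ p q : V, (p = a ∨ p = b ∨ p = c) ∧ (q = a ∨ q = b ∨ q = c) ∧ p ≠ q ∧
        WalkIn H {x | x ≠ u} p q) :
    ∀ n : ℕ, ∀ M S T : Set V, M.Finite → M.ncard ≤ n →
    (H.induce M).Connected → (H.induce S).Connected → (H.induce T).Connected →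
    a ∈ M → b ∈ S → c ∈ T →
    Disjoint M S → Disjoint M T → Disjoint S T →
    AdjS H M S → AdjS H M T → Config H a b c := by
  intro n
  induction n with
  | zero =>
    intro M S T hfin hcard _ _ _ haM _ _ _ _ _ _ _
    rw [Nat.le_zero, Set.ncard_eq_zero hfin] at hcard
    exact absurd haM (hcard ▸ Set.notMem_empty a)
  | succ n ih =>
    intro M S T hfin hcard hcM hcS hcT haM hbS hcInT dMS dMT dST adjMS adjMT
    have haS : a ∉ S := Set.disjoint_left.mp dMS haM
    have haT : a ∉ T := Set.disjoint_left.mp dMT haM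
    by_cases hone : ∀ w ∈ M, w = a
    · -- M ⊆ {a}
      obtain ⟨w, hwsup⟩ := hypA
      obtain ⟨S', hsub, hcS', hdS'T, hdS'a, hadjS'T⟩ :=
        absorb (D := T) (U := {a}) w S hcS hbS hcInT dST
          (Set.disjoint_singleton_right.mpr haS)
          (fun v hv => by simpa using hwsup v hv)
      have haS' : a ∉ S' := Set.disjoint_singleton_right.mp hdS'a
      have dMS' : Disjoint M S' := by
        rw [Set.disjoint_left]
        intro v hv hvS'
        exact haS' ((hone v hv) ▸ hvS')
      exact ⟨M, S', T, hcM, hcS', hcT, dMS', dMT, hdS'T,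
        adjMS.mono_right hsub, adjMT, hadjS'T, haM, hsub hbS, hcInT⟩
    · push_neg at hone
      obtain ⟨u, huM, hua, hconn', m, hmMu, hadjum⟩ := removable hfin hcM haM hone
      have huM' : u ∉ M \ {u} := fun h => h.2 rfl
      have huS : u ∉ S := Set.disjoint_left.mp dMS huM
      have huT : u ∉ T := Set.disjoint_left.mp dMT huM
      have haM' : a ∈ M \ {u} := ⟨haM, fun h => hua (Eq.symm h)⟩
      have hfin' : (M \ {u}).Finite := hfin.subset Set.diff_subset
      have hcard' : (M \ {u}).ncard ≤ n := by
        have := Set.ncard_diff_singleton_lt_of_mem huM hfin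
        omega
      have dM'S : Disjoint (M \ {u}) S := dMS.mono_left Set.diff_subset
      have dM'T : Disjoint (M \ {u}) T := dMT.mono_left Set.diff_subset
      by_cases hS' : AdjS H (M \ {u}) S
      · by_cases hT' : AdjS H (M \ {u}) T
        · exact ih (M \ {u}) S T hfin' hcard' hconn' hcS hcT haM' hbS hcInT
            dM'S dM'T dST hS' hT'
        · have huTadj : ∃ q ∈ T, H.Adj u q := by
            obtain ⟨p, hp, q, hq, hpq⟩ := adjMT
            by_cases hpu : p = u
            · exact ⟨q, hq, hpu ▸ hpq⟩
            · exact absurd ⟨p, ⟨hp, hpu⟩, q, hq, hpq⟩ hT'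
          obtain ⟨q0, hq0, huq0⟩ := huTadj
          exact ih (M \ {u}) S (insert u T) hfin' hcard' hconn' hcS
            (connOn_insert hcT hq0 huq0) haM' hbS (Set.mem_insert_of_mem _ hcInT)
            dM'S ((disj_insert dM'T.symm huM').symm) ((disj_insert dST.symm huS).symm)
            hS' ⟨m, hmMu, u, Set.mem_insert _ _, hadjum.symm⟩
      · have huSadj : ∃ q ∈ S, H.Adj u q := by
          obtain ⟨p, hp, q, hq, hpq⟩ := adjMS
          by_cases hpu : p = u
          · exact ⟨q, hq, hpu ▸ hpq⟩
          · exact absurd ⟨p, ⟨hp, hpu⟩, q, hq, hpq⟩ hS'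
        obtain ⟨q0, hq0, huq0⟩ := huSadj
        by_cases hT' : AdjS H (M \ {u}) T
        · exact ih (M \ {u}) (insert u S) T hfin' hcard' hconn'
            (connOn_insert hcS hq0 huq0) hcT haM' (Set.mem_insert_of_mem _ hbS) hcInT
            ((disj_insert dM'S.symm huM').symm) dM'T (disj_insert dST huT)
            ⟨m, hmMu, u, Set.mem_insert _ _, hadjum.symm⟩ hT'
        · have huTadj : ∃ q ∈ T, H.Adj u q := by
            obtain ⟨p, hp, q, hq, hpq⟩ := adjMT
            by_cases hpu : p = u
            · exact ⟨q, hq, hpu ▸ hpq⟩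
            · exact absurd ⟨p, ⟨hp, hpu⟩, q, hq, hpq⟩ hT'
          obtain ⟨q1, hq1, huq1⟩ := huTadj
          have hub : u ≠ b := fun h => huS (h ▸ hbS)
          have huc : u ≠ c := fun h => huT (h ▸ hcInT)
          exact tripodAny hconn' hcS hcT haM' hbS hcInT dM'S dM'T dST huM' huS huT
            ⟨m, hmMu, hadjum⟩ ⟨q0, hq0, huq0⟩ ⟨q1, hq1, huq1⟩ (hypU u hua hub huc)

lemma mkA {x y z a b c : V}
    (hyp0 : ∀ v : V, ∃ p q : V, p ∈ ({x, y, z} : Set V) ∧ q ∈ ({x, y, z} : Set V) ∧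
      p ≠ v ∧ q ≠ v ∧ p ≠ q ∧ WalkIn H {t | t ≠ v} p q)
    (hmem : ∀ w : V, w ∈ ({x, y, z} : Set V) ↔ (w = a ∨ w = b ∨ w = c))
    (hab : a ≠ b) (hac : a ≠ c) (hbc : b ≠ c) : WalkIn H {t | t ≠ a} b c := by
  obtain ⟨p, q, hp, hq, hpv, hqv, hpq, hw⟩ := hyp0 a
  rw [hmem] at hp hq
  rcases hp with rfl | rfl | rfl <;> rcases hq with rfl | rfl | rfl <;>
    first
      | exact absurd rfl hpv
      | exact absurd rfl hqv
      | exact absurd rfl hpq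
      | exact hw
      | exact hw.symm

lemma mkU {x y z a b c : V}
    (hyp0 : ∀ v : V, ∃ p q : V, p ∈ ({x, y, z} : Set V) ∧ q ∈ ({x, y, z} : Set V) ∧
      p ≠ v ∧ q ≠ v ∧ p ≠ q ∧ WalkIn H {t | t ≠ v} p q)
    (hmem : ∀ w : V, w ∈ ({x, y, z} : Set V) ↔ (w = a ∨ w = b ∨ w = c))
    (u : V) :
    ∃ p q : V, (p = a ∨ p = b ∨ p = c) ∧ (q = a ∨ q = b ∨ q = c) ∧ p ≠ q ∧
      WalkIn H {t | t ≠ u} p q := by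
  obtain ⟨p, q, hp, hq, _, _, hpq, hw⟩ := hyp0 u
  exact ⟨p, q, (hmem p).mp hp, (hmem q).mp hq, hpq, hw⟩

end K3Aux




/-- Let `x`, `y`, `z` be distinct vertices of a graph `H`. There is a
`K₃`-minor of `H` rooted at `{x, y, z}` (three pairwise-disjoint, pairwise-adjacent
connected fragments containing `x`, `y`, `z` respectively) if and only if there is no
vertex `v` for which the vertices of `{x, y, z} \ {v}` lie in distinct connected
components of `H - v`. -/

theorem rooted_K3_minor_iff {V : Type} [Fintype V] (H : SimpleGraph V) (x y z : V)
    (hxy : x ≠ y) (hxz : x ≠ z) (hyz : y ≠ z) :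
    (∃ X Y Z : Set V,
      (H.induce X).Connected ∧ (H.induce Y).Connected ∧ (H.induce Z).Connected ∧
      Disjoint X Y ∧ Disjoint X Z ∧ Disjoint Y Z ∧
      (∃ a ∈ X, ∃ b ∈ Y, H.Adj a b) ∧
      (∃ a ∈ X, ∃ b ∈ Z, H.Adj a b) ∧
      (∃ a ∈ Y, ∃ b ∈ Z, H.Adj a b) ∧
      x ∈ X ∧ y ∈ Y ∧ z ∈ Z) ↔
    ¬ ∃ v : V, ∀ a b : V, a ∈ ({x, y, z} : Set V) → b ∈ ({x, y, z} : Set V) →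
      ∀ (hav : a ≠ v) (hbv : b ≠ v), a ≠ b →
        ¬ (H.induce {u | u ≠ v}).Reachable ⟨a, hav⟩ ⟨b, hbv⟩ := by
  classical
  constructor
  · -- forward: config implies no separator
    rintro ⟨X, Y, Z, cX, cY, cZ, dXY, dXZ, dYZ, aXY, aXZ, aYZ, mX, mY, mZ⟩
    rintro ⟨v, hv⟩
    have key : ∀ (A B : Set V) (p q : V), p ∈ ({x, y, z} : Set V) → q ∈ ({x, y, z} : Set V) →
        p ∈ A → q ∈ B → (H.induce A).Connected → (H.induce B).Connected →
        (∃ s ∈ A, ∃ t ∈ B, H.Adj s t) → v ∉ A → v ∉ B → p ≠ q → False := by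
      intro A B p q hpr hqr hpA hqB cA cB hadj hvA hvB hpq
      obtain ⟨s, hs, t, ht, hst⟩ := hadj
      have hAsub : A ⊆ {u | u ≠ v} := fun u hu => fun h => hvA (h ▸ hu)
      have hBsub : B ⊆ {u | u ≠ v} := fun u hu => fun h => hvB (h ▸ hu)
      have hw : K3Aux.WalkIn H {u | u ≠ v} p q :=
        ((((K3Aux.connOn_iff.mp cA).2 p hpA s hs).mono hAsub).trans
          (K3Aux.WalkIn.single hst (hAsub hs) (hBsub ht))).trans
          (((K3Aux.connOn_iff.mp cB).2 t ht q hqB).mono hBsub)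
      have hpv : p ≠ v := hAsub hpA
      have hqv : q ≠ v := hBsub hqB
      exact hv p q hpr hqr hpv hqv hpq
        (K3Aux.reachable_induce_of_walkIn hw hpv hqv)
    have hxm : x ∈ ({x, y, z} : Set V) := by simp
    have hym : y ∈ ({x, y, z} : Set V) := by simp
    have hzm : z ∈ ({x, y, z} : Set V) := by simp
    by_cases hvX : v ∈ X
    · exact key Y Z y z hym hzm mY mZ cY cZ aYZ
        (Set.disjoint_left.mp dXY hvX) (Set.disjoint_left.mp dXZ hvX) hyz
    · by_cases hvY : v ∈ Y
      · exact key X Z x z hxm hzm mX mZ cX cZ aXZ hvX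
          (Set.disjoint_left.mp dYZ hvY) hxz
      · exact key X Y x y hxm hym mX mY cX cY aXY hvX hvY hxy
  · -- backward
    intro hsep
    push_neg at hsep
    have hyp0 : ∀ v : V, ∃ p q : V, p ∈ ({x, y, z} : Set V) ∧ q ∈ ({x, y, z} : Set V) ∧
        p ≠ v ∧ q ≠ v ∧ p ≠ q ∧ K3Aux.WalkIn H {t | t ≠ v} p q := by
      intro v
      obtain ⟨p, q, hp, hq, hpv, hqv, hpq, hreach⟩ := hsep v
      exact ⟨p, q, hp, hq, hpv, hqv, hpq, K3Aux.walkIn_of_reachable_induce hreach⟩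
    -- hmem façades for the permutations used
    have hmem_xyz : ∀ w : V, w ∈ ({x, y, z} : Set V) ↔ (w = x ∨ w = y ∨ w = z) := by
      intro w; simp
    have hmem_yxz : ∀ w : V, w ∈ ({x, y, z} : Set V) ↔ (w = y ∨ w = x ∨ w = z) := by
      intro w; simp; tauto
    have hmem_zxy : ∀ w : V, w ∈ ({x, y, z} : Set V) ↔ (w = z ∨ w = x ∨ w = y) := by
      intro w; simp; tauto
    -- step 1: walk from y to z avoiding x
    have hwyz : K3Aux.WalkIn H {t | t ≠ x} y z :=
      K3Aux.mkA hyp0 hmem_xyz hxy hxz hyz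
    obtain ⟨w1, hw1⟩ := hwyz
    -- step 2: grow a connected set B around y adjacent to z
    obtain ⟨B, hBsub, hcB, hdBz, hdBx, hadjBz⟩ :=
      K3Aux.absorb (D := {z}) (U := {x}) w1 {y} (K3Aux.connOn_singleton y) rfl rfl
        (by simp [hyz]) (by simp [hxy.symm]) (fun v hv => by simpa using hw1 v hv)
    have hyB : y ∈ B := hBsub rfl
    have hzB : z ∉ B := Set.disjoint_singleton_right.mp hdBz
    have hxB : x ∉ B := Set.disjoint_singleton_right.mp hdBx
    -- step 3: walk from x to z avoiding y, grow X' around x adjacent to B ∪ {z}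
    have hwxz : K3Aux.WalkIn H {t | t ≠ y} x z :=
      K3Aux.mkA hyp0 hmem_yxz hxy.symm hyz hxz
    obtain ⟨w2, hw2⟩ := hwxz
    obtain ⟨X', hXsub, hcX', hdX', -, p, hpX', q, hq, hpq⟩ :=
      K3Aux.absorb (D := B ∪ {z}) (U := (∅ : Set V)) w2 {x} (K3Aux.connOn_singleton x) rfl
        (Or.inr rfl)
        (by rw [Set.disjoint_union_right]
            constructor
            · simpa using hxB
            · simp [hxz])
        (Set.disjoint_empty _) (fun v _ h => h.elim)
    have hxX' : x ∈ X' := hXsub rfl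
    have hdX'B : Disjoint X' B := (Set.disjoint_union_right.mp hdX').1
    have hdX'z : Disjoint X' ({z} : Set V) := (Set.disjoint_union_right.mp hdX').2
    rcases hq with hqB | hqz
    · -- center B, roles (y, x, z)
      have hcfg : K3Aux.Config H y x z :=
        K3Aux.main y x z (K3Aux.mkA hyp0 hmem_yxz hxy.symm hyz hxz)
          (fun u hu1 hu2 hu3 => K3Aux.mkU hyp0 hmem_yxz u) B.ncard B X' {z}
          (Set.toFinite B) le_rfl hcB hcX' (K3Aux.connOn_singleton z)
          hyB hxX' rfl hdX'B.symm hdBz hdX'z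
          ⟨q, hqB, p, hpX', hpq.symm⟩ hadjBz
      exact hcfg.swap12
    · -- center {z}, roles (z, x, y)
      have hqz' : q = z := hqz
      have hcfg : K3Aux.Config H z x y :=
        K3Aux.main z x y (K3Aux.mkA hyp0 hmem_zxy hxz.symm hyz.symm hxy)
          (fun u hu1 hu2 hu3 => K3Aux.mkU hyp0 hmem_zxy u) 1 {z} X' B
          (Set.toFinite _) (by simp) (K3Aux.connOn_singleton z) hcX' hcB
          rfl hxX' hyB hdX'z.symm hdBz.symm hdX'B
          ⟨z, rfl, p, hpX', hqz' ▸ hpq.symm⟩ (K3Aux.AdjS.symm hadjBz)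
      exact hcfg.swap12.swap23
end
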